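/- Let (A,*) be a commutative, possibly nonassociative and nonunital ring such that the additive subgroup generated by all products {x*y : x,y ∈ A} is all of A, and let h and f be automorphisms of (A,*). Then the following are equivalent: (1) there exists a bijective additive map g : A → A such that g(h(x*y)) = h(g(x)*g(y)) for all x,y ∈ A (i.e. g is an automorphism of the inner isotope (A,*_h)) and f(x*y) = g(h(x*y)) for all x,y ∈ A (i.e. *_f is the inner isotope of *_h by g); (2) f ∘ h = h ∘ f. -/

import Mathlib

/-- For a commutative (possibly nonassociative, nonunital) ring `A` whose additive group is
generated by products, and automorphisms `h f` of `A`, the isotope `*_f` is an inner isotope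
of `*_h` iff `f` and `h` commute. -/
theorem stmt_0 {A : Type*} [NonUnitalNonAssocCommRing A]
    (hA : AddSubgroup.closure {z : A | ∃ x y : A, x * y = z} = ⊤)
    (h f : A ≃+* A) :
    (∃ g : A → A, Function.Bijective g ∧ (∀ x y : A, g (x + y) = g x + g y) ∧
      (∀ x y : A, g (h (x * y)) = h (g x * g y)) ∧
      (∀ x y : A, f (x * y) = g (h (x * y)))) ↔
    (∀ x : A, f (h x) = h (f x)) := by
  constructor
  · rintro ⟨g, hbij, hadd, h3, h4⟩ x
    -- g 0 = 0 and g (-a) = -g a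
    have hg0 : g 0 = 0 := by
      have := hadd 0 0
      simpa using this
    have hgneg : ∀ a, g (-a) = -g a := by
      intro a
      have := hadd a (-a)
      simp [hg0] at this
      exact eq_neg_of_add_eq_zero_right this.symm
    -- g = f ∘ h.symm
    have hg_eq : ∀ a : A, g a = f (h.symm a) := by
      intro a
      have ha : a ∈ AddSubgroup.closure {z : A | ∃ x y : A, x * y = z} := by
        rw [hA]; trivial
      induction ha using AddSubgroup.closure_induction with
      | mem z hz =>
          obtain ⟨x, y, rfl⟩ := hz
          have := h4 (h.symm x) (h.symm y)
          rw [← map_mul h.symm x y, RingEquiv.apply_symm_apply] at this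
          exact this.symm
      | zero => simp [hg0]
      | add a b _ _ iha ihb => rw [hadd, iha, ihb]; simp
      | neg a _ iha => rw [hgneg, iha]; simp
    -- now show f (h x) = h (f x), equivalently f z = h (f (h.symm z))
    have key : ∀ z : A, f z = h (f (h.symm z)) := by
      intro z
      have hz : z ∈ AddSubgroup.closure {z : A | ∃ x y : A, x * y = z} := by
        rw [hA]; trivial
      induction hz using AddSubgroup.closure_induction with
      | mem z hz =>
          obtain ⟨x, y, rfl⟩ := hz
          rw [h4 x y, h3 x y, hg_eq x, hg_eq y, ← map_mul f, ← map_mul h.symm]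
      | zero => simp
      | add a b _ _ iha ihb => rw [map_add, iha, ihb]; simp
      | neg a _ iha => rw [map_neg, iha]; simp
    have := key (h x)
    rwa [RingEquiv.symm_apply_apply] at this
  · intro hc
    refine ⟨fun a => f (h.symm a), ?_, ?_, ?_, ?_⟩
    · exact f.bijective.comp h.symm.bijective
    · intro x y; simp
    · intro x y
      show f (h.symm (h (x * y))) = h (f (h.symm x) * f (h.symm y))
      rw [RingEquiv.symm_apply_apply, ← map_mul f, ← map_mul h.symm, ← hc,
        RingEquiv.apply_symm_apply]
    · intro x y
      show f (x * y) = f (h.symm (h (x * y)))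
      rw [RingEquiv.symm_apply_apply]
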